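/- arXiv:0812.2553 — 2 statements merged into one kernel-verified Lean document; each statement's English description precedes it below -/
import Mathlib

section
/- (Theorem 6) For every odd integer p ≥ 1 and every odd positive integer m, one has m^p T_p(1, m) = Σ_{i=0}^{p} C(p,i) E_{p−i} E_i m^{p−i} − 2 E_p, where E_i denotes the i-th Euler number. -/
open Finset

/-- The Euler numbers `E_n`, defined by `E_0 = 1` and the recurrence
`∑_{l=0}^{n} C(n,l) E_l + E_n = 0` for `n ≥ 1`. -/
def eulerNumber : ℕ → ℚ
  | 0 => 1
  | n + 1 => -(∑ l : Fin (n + 1), ((n + 1).choose l : ℚ) * eulerNumber l) / 2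

lemma eulerNumber_zero : eulerNumber 0 = 1 := by rw [eulerNumber]




/-- the recurrence: `∑_{l=0}^{n} C(n,l) E_l = -E_n` for `n ≥ 1`. -/
lemma euler_rec (n : ℕ) (hn : 1 ≤ n) :
    ∑ l ∈ range (n + 1), (n.choose l : ℚ) * eulerNumber l = -eulerNumber n := by
  obtain ⟨k, rfl⟩ : ∃ k, n = k + 1 := ⟨n - 1, by omega⟩
  have hdef : eulerNumber (k + 1)
      = -(∑ l ∈ range (k + 1), ((k + 1).choose l : ℚ) * eulerNumber l) / 2 := by
    rw [eulerNumber,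
      Fin.sum_univ_eq_sum_range (fun l => (((k+1)).choose l : ℚ) * eulerNumber l) (k+1)]
  rw [sum_range_succ, Nat.choose_self]
  rw [hdef]
  ring

lemma trinom (p l j : ℕ) (hl : l ≤ p) :
    p.choose l * (p - l).choose j = p.choose j * (p - j).choose l := by
  by_cases h : j ≤ p - l
  · have h1 : l + j ≤ p := by omega
    have h2 : p.choose l = p.choose (p - l) := (Nat.choose_symm hl).symm
    rw [h2, Nat.choose_mul (n := p) h]
    have h3 : p - l - j = p - (l + j) := by omega
    have h4 : (p - j).choose (p - l - j) = (p - j).choose l := by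
      rw [h3]
      have : p - (l + j) = (p - j) - l := by omega
      rw [this, Nat.choose_symm (by omega)]
    rw [h4]
  · have h1 : (p - l).choose j = 0 := Nat.choose_eq_zero_of_lt (by omega)
    rw [h1, Nat.mul_zero]
    by_cases hj : j ≤ p
    · have : (p - j).choose l = 0 := Nat.choose_eq_zero_of_lt (by omega)
      rw [this, Nat.mul_zero]
    · have : p.choose j = 0 := Nat.choose_eq_zero_of_lt (by omega)
      rw [this, Nat.zero_mul]

/-- signed recurrence as an if-statement (valid for all n) -/
lemma euler_rec_if (n : ℕ) :
    ∑ l ∈ range (n + 1), (n.choose l : ℚ) * eulerNumber l + eulerNumber n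
      = if n = 0 then 2 else 0 := by
  rcases Nat.eq_zero_or_pos n with h | h
  · subst h; simp [eulerNumber_zero]; norm_num [eulerNumber_zero]
  · rw [euler_rec n h, if_neg (by omega)]; ring

lemma eulerNumber_one : eulerNumber 1 = -(1/2) := by
  have h := euler_rec 1 le_rfl
  rw [show (1:ℕ)+1 = 2 from rfl, Finset.sum_range_succ, Finset.sum_range_succ,
    Finset.sum_range_zero] at h
  simp [eulerNumber_zero] at h
  linarith

lemma euler_alt (n : ℕ) :
    ∑ l ∈ range (n + 1), (n.choose l : ℚ) * ((-1) ^ l * eulerNumber l)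
      + (-1) ^ n * eulerNumber n = 2 := by
  -- key claim A for every k
  have A : ∀ k : ℕ, (∑ l ∈ range (k + 1),
        (k.choose l : ℚ) * (-1) ^ (k - l) * ((-1) ^ l * eulerNumber l))
        + (-1) ^ k * eulerNumber k = (if k = 0 then 2 else 0) := by
    intro k
    have hcg : ∀ l ∈ range (k + 1),
        (k.choose l : ℚ) * (-1) ^ (k - l) * ((-1) ^ l * eulerNumber l)
          = (-1) ^ k * ((k.choose l : ℚ) * eulerNumber l) := by
      intro l hl
      rw [mem_range] at hl
      have hpow : (-1 : ℚ) ^ (k - l) * (-1) ^ l = (-1) ^ k := by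
        rw [← pow_add, Nat.sub_add_cancel (by omega)]
      calc (k.choose l : ℚ) * (-1) ^ (k - l) * ((-1) ^ l * eulerNumber l)
          = ((-1 : ℚ) ^ (k - l) * (-1) ^ l) * ((k.choose l : ℚ) * eulerNumber l) := by ring
        _ = (-1) ^ k * ((k.choose l : ℚ) * eulerNumber l) := by rw [hpow]
    rw [sum_congr rfl hcg, ← mul_sum]
    have h0 := euler_rec_if k
    rcases Nat.eq_zero_or_pos k with h | h
    · subst h; simp [eulerNumber_zero]; norm_num
    · rw [if_neg (by omega)] at h0 ⊢
      have hs : ∑ l ∈ range (k + 1), (k.choose l : ℚ) * eulerNumber l = -eulerNumber k := by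
        linarith
      rw [hs]; ring
  -- sum A over k weighted by C(n,k)
  have key : ∑ k ∈ range (n + 1), (n.choose k : ℚ) *
      ((∑ l ∈ range (k + 1), (k.choose l : ℚ) * (-1) ^ (k - l) * ((-1) ^ l * eulerNumber l))
        + (-1) ^ k * eulerNumber k) = 2 := by
    rw [sum_congr rfl (fun k _ => by rw [A k])]
    rw [sum_eq_single 0 (fun k _ hk => by rw [if_neg hk, mul_zero])
      (fun h => absurd (mem_range.2 (by omega)) h)]
    simp
  -- now expand the double sum in `key`
  have expand : ∑ k ∈ range (n + 1), (n.choose k : ℚ) *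
      ((∑ l ∈ range (k + 1), (k.choose l : ℚ) * (-1) ^ (k - l) * ((-1) ^ l * eulerNumber l))
        + (-1) ^ k * eulerNumber k)
      = (∑ k ∈ range (n + 1), ∑ l ∈ range (n + 1),
          (n.choose k : ℚ) * ((k.choose l : ℚ) * (-1) ^ (k - l) * ((-1) ^ l * eulerNumber l)))
        + ∑ k ∈ range (n + 1), (n.choose k : ℚ) * ((-1) ^ k * eulerNumber k) := by
    rw [← sum_add_distrib]
    refine sum_congr rfl fun k hk => ?_
    rw [mem_range] at hk
    rw [mul_add, mul_sum]
    congr 1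
    -- extend inner range from k+1 to n+1 using choose = 0
    refine sum_subset (range_subset_range.2 (by omega)) fun x hx hnx => ?_
    have : k.choose x = 0 := Nat.choose_eq_zero_of_lt (by rw [mem_range] at *; omega)
    rw [this]
    push_cast
    ring
  -- evaluate the double sum via swapping
  have dval : ∑ k ∈ range (n + 1), ∑ l ∈ range (n + 1),
      (n.choose k : ℚ) * ((k.choose l : ℚ) * (-1) ^ (k - l) * ((-1) ^ l * eulerNumber l))
      = (-1) ^ n * eulerNumber n := by
    rw [sum_comm]
    have hl : ∀ l ∈ range (n + 1), ∑ k ∈ range (n + 1),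
        (n.choose k : ℚ) * ((k.choose l : ℚ) * (-1) ^ (k - l) * ((-1) ^ l * eulerNumber l))
        = (if l = n then 1 else 0) * ((-1) ^ l * eulerNumber l) := by
      intro l hlr
      rw [mem_range] at hlr
      -- restrict to k ≥ l
      rw [range_eq_Ico, ← Finset.sum_Ico_consecutive _ (Nat.zero_le l) (by omega : l ≤ n + 1)]
      have hzero : ∑ k ∈ Finset.Ico 0 l,
          (n.choose k : ℚ) * ((k.choose l : ℚ) * (-1) ^ (k - l) * ((-1) ^ l * eulerNumber l))
          = 0 := by
        apply Finset.sum_eq_zero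
        intro k hk
        rw [Finset.mem_Ico] at hk
        rw [Nat.choose_eq_zero_of_lt hk.2]
        push_cast; ring
      rw [hzero, zero_add]
      rw [Finset.sum_Ico_eq_sum_range]
      have hcg : ∀ j ∈ range (n + 1 - l),
          (n.choose (l + j) : ℚ) * (((l + j).choose l : ℚ) * (-1) ^ ((l + j) - l)
            * ((-1) ^ l * eulerNumber l))
          = (n.choose l : ℚ) * (((n - l).choose j : ℚ) * (-1) ^ j) * ((-1) ^ l * eulerNumber l) := by
        intro j hj
        rw [mem_range] at hj
        have h1 : n.choose (l + j) * (l + j).choose l = n.choose l * (n - l).choose j := by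
          have := Nat.choose_mul (n := n) (show l ≤ l + j by omega)
          simpa using this
        have h2 : l + j - l = j := by omega
        rw [h2]
        have := congrArg (fun t : ℕ => (t : ℚ)) h1
        push_cast at this
        calc (n.choose (l + j) : ℚ) * (((l + j).choose l : ℚ) * (-1) ^ j * ((-1) ^ l * eulerNumber l))
            = ((n.choose (l + j) : ℚ) * ((l + j).choose l : ℚ)) * ((-1) ^ j * ((-1) ^ l * eulerNumber l)) := by ring
          _ = ((n.choose l : ℚ) * ((n - l).choose j : ℚ)) * ((-1) ^ j * ((-1) ^ l * eulerNumber l)) := by rw [this]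
          _ = (n.choose l : ℚ) * (((n - l).choose j : ℚ) * (-1) ^ j) * ((-1) ^ l * eulerNumber l) := by ring
      rw [sum_congr rfl hcg]
      have haltsum : ∑ j ∈ range (n + 1 - l), (((n - l).choose j : ℚ) * (-1) ^ j)
          = if n - l = 0 then 1 else 0 := by
        have h3 : n + 1 - l = (n - l) + 1 := by omega
        rw [h3]
        have := Int.alternating_sum_range_choose (n := n - l)
        have h4 := congrArg (fun t : ℤ => (t : ℚ)) this
        push_cast at h4
        rw [← h4]
        apply sum_congr rfl
        intro j _
        ring
      calc ∑ j ∈ range (n + 1 - l), (n.choose l : ℚ) * (((n - l).choose j : ℚ) * (-1) ^ j)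
            * ((-1) ^ l * eulerNumber l)
          = ((n.choose l : ℚ) * ∑ j ∈ range (n + 1 - l), (((n - l).choose j : ℚ) * (-1) ^ j))
            * ((-1) ^ l * eulerNumber l) := by rw [mul_sum, sum_mul]
        _ = ((n.choose l : ℚ) * (if n - l = 0 then 1 else 0)) * ((-1) ^ l * eulerNumber l) := by
            rw [haltsum]
        _ = (if l = n then 1 else 0) * ((-1) ^ l * eulerNumber l) := by
            by_cases h : l = n
            · subst h; simp
            · rw [if_neg h, if_neg (by omega)]; ring
    rw [sum_congr rfl hl]
    rw [sum_eq_single n (fun k _ hk => by rw [if_neg hk, zero_mul])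
      (fun h => absurd (mem_range.2 (by omega)) h)]
    rw [if_pos rfl, one_mul]
  rw [expand, dval] at key
  linarith [key]

lemma euler_neg (n : ℕ) (hn : 1 ≤ n) : (-1 : ℚ) ^ n * eulerNumber n = -eulerNumber n := by
  induction n using Nat.strong_induction_on with
  | _ n IH =>
    have key := euler_alt n
    rw [sum_range_succ] at key
    -- rewrite the terms l < n using IH (l = 0 handled separately)
    have hcg : ∀ l ∈ range n, (n.choose l : ℚ) * ((-1) ^ l * eulerNumber l)
        = (n.choose l : ℚ) * ((if l = 0 then 2 else 0) - eulerNumber l) := by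
      intro l hl
      rw [mem_range] at hl
      rcases Nat.eq_zero_or_pos l with h | h
      · subst h; simp [eulerNumber_zero]; norm_num
      · rw [IH l hl h, if_neg (by omega)]; ring
    rw [sum_congr rfl hcg] at key
    have hsplit : ∑ l ∈ range n, (n.choose l : ℚ) * ((if l = 0 then 2 else 0) - eulerNumber l)
        = (∑ l ∈ range n, (n.choose l : ℚ) * (if l = 0 then 2 else 0))
          - ∑ l ∈ range n, (n.choose l : ℚ) * eulerNumber l := by
      rw [← sum_sub_distrib]; apply sum_congr rfl; intro l _; ring
    have hif : ∑ l ∈ range n, (n.choose l : ℚ) * (if l = 0 then 2 else 0) = 2 := by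
      rw [sum_eq_single 0 (fun k _ hk => by rw [if_neg hk, mul_zero])
        (fun h => absurd (mem_range.2 (by omega)) h)]
      simp
    have hrec : ∑ l ∈ range n, (n.choose l : ℚ) * eulerNumber l = -2 * eulerNumber n := by
      have := euler_rec n hn
      rw [sum_range_succ, Nat.choose_self] at this
      push_cast at this
      linarith
    rw [hsplit, hif, hrec, Nat.choose_self] at key
    push_cast at key
    linarith

lemma euler_even_zero (n : ℕ) (hn : 1 ≤ n) (he : Even n) : eulerNumber n = 0 := by
  have h := euler_neg n hn
  rw [he.neg_one_pow, one_mul] at h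
  linarith

/-- The Euler polynomials `E_n(x) = ∑_{l=0}^{n} C(n,l) E_l x^{n-l}`. -/
noncomputable def eulerPoly (n : ℕ) (x : ℝ) : ℝ :=
  ∑ l ∈ Finset.range (n + 1), (n.choose l : ℝ) * (eulerNumber l : ℝ) * x ^ (n - l)

lemma euler_rec_real (n : ℕ) (hn : 1 ≤ n) :
    ∑ l ∈ range (n + 1), (n.choose l : ℝ) * (eulerNumber l : ℝ) = -(eulerNumber n : ℝ) := by
  exact_mod_cast congrArg (fun q : ℚ => (q : ℝ)) (euler_rec n hn)

lemma hsum_eval (q r : ℕ) (hr : r ≤ q) :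
    ∑ l ∈ range (q + 1), (r.choose l : ℝ) * (eulerNumber l : ℝ)
      = -(eulerNumber r : ℝ) + (if r = 0 then 2 else 0) := by
  have htrunc : ∑ l ∈ range (q + 1), (r.choose l : ℝ) * (eulerNumber l : ℝ)
      = ∑ l ∈ range (r + 1), (r.choose l : ℝ) * (eulerNumber l : ℝ) := by
    refine (sum_subset (range_subset_range.2 (by omega)) fun x hx hnx => ?_).symm
    have : r.choose x = 0 := Nat.choose_eq_zero_of_lt (by rw [mem_range] at *; omega)
    rw [this]; push_cast; ring
  rw [htrunc]
  rcases Nat.eq_zero_or_pos r with h | h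
  · subst h; simp [eulerNumber_zero]; norm_num
  · rw [euler_rec_real r h, if_neg (by omega)]; ring

lemma eulerPoly_reflect (q : ℕ) (x : ℝ) :
    eulerPoly q x = ∑ k ∈ range (q + 1), (q.choose k : ℝ) * (eulerNumber (q - k) : ℝ) * x ^ k := by
  unfold eulerPoly
  rw [← Finset.sum_range_reflect]
  apply sum_congr rfl
  intro k hk
  rw [mem_range] at hk
  have h1 : q + 1 - 1 - k = q - k := by omega
  have h2 : q - (q - k) = k := by omega
  have h3 : q.choose (q - k) = q.choose k := Nat.choose_symm (by omega)
  rw [h1, h2, h3]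

lemma eulerPoly_succ (q : ℕ) (x : ℝ) : eulerPoly q (x + 1) + eulerPoly q x = 2 * x ^ q := by
  have expand : eulerPoly q (x + 1)
      = ∑ k ∈ range (q + 1), (∑ l ∈ range (q + 1),
          (q.choose l : ℝ) * (eulerNumber l : ℝ) * ((q - l).choose k : ℝ)) * x ^ k := by
    unfold eulerPoly
    have h1 : ∀ l ∈ range (q + 1),
        (q.choose l : ℝ) * (eulerNumber l : ℝ) * (x + 1) ^ (q - l)
        = ∑ k ∈ range (q + 1),
            (q.choose l : ℝ) * (eulerNumber l : ℝ) * ((q - l).choose k : ℝ) * x ^ k := by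
      intro l hl
      rw [mem_range] at hl
      have hb : (x + 1) ^ (q - l) = ∑ k ∈ range (q - l + 1), ((q - l).choose k : ℝ) * x ^ k := by
        rw [add_pow]
        apply sum_congr rfl
        intro k _
        rw [one_pow]
        ring
      have hext : ∑ k ∈ range (q - l + 1), ((q - l).choose k : ℝ) * x ^ k
          = ∑ k ∈ range (q + 1), ((q - l).choose k : ℝ) * x ^ k := by
        refine sum_subset (range_subset_range.2 (by omega)) fun k hk hnk => ?_
        have : (q - l).choose k = 0 := Nat.choose_eq_zero_of_lt (by rw [mem_range] at *; omega)
        rw [this]; push_cast; ring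
      rw [hb, hext, mul_sum]
      apply sum_congr rfl
      intro k _
      ring
    rw [sum_congr rfl h1, sum_comm]
    apply sum_congr rfl
    intro k _
    rw [sum_mul]
  have inner : ∀ k ∈ range (q + 1),
      (∑ l ∈ range (q + 1), (q.choose l : ℝ) * (eulerNumber l : ℝ) * ((q - l).choose k : ℝ))
      = (q.choose k : ℝ) * (-(eulerNumber (q - k) : ℝ) + (if q - k = 0 then 2 else 0)) := by
    intro k hk
    rw [mem_range] at hk
    have h1 : ∀ l ∈ range (q + 1),
        (q.choose l : ℝ) * (eulerNumber l : ℝ) * ((q - l).choose k : ℝ)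
        = (q.choose k : ℝ) * (((q - k).choose l : ℝ) * (eulerNumber l : ℝ)) := by
      intro l hl
      rw [mem_range] at hl
      have := trinom q l k (by omega)
      have hc := congrArg (fun t : ℕ => (t : ℝ)) this
      push_cast at hc
      calc (q.choose l : ℝ) * (eulerNumber l : ℝ) * ((q - l).choose k : ℝ)
          = ((q.choose l : ℝ) * ((q - l).choose k : ℝ)) * (eulerNumber l : ℝ) := by ring
        _ = ((q.choose k : ℝ) * ((q - k).choose l : ℝ)) * (eulerNumber l : ℝ) := by rw [hc]
        _ = (q.choose k : ℝ) * (((q - k).choose l : ℝ) * (eulerNumber l : ℝ)) := by ring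
    rw [sum_congr rfl h1, ← mul_sum, hsum_eval q (q - k) (by omega)]
  have expand2 : ∑ k ∈ range (q + 1), (∑ l ∈ range (q + 1),
        (q.choose l : ℝ) * (eulerNumber l : ℝ) * ((q - l).choose k : ℝ)) * x ^ k
      = ∑ k ∈ range (q + 1),
        (q.choose k : ℝ) * (-(eulerNumber (q - k) : ℝ) + (if q - k = 0 then 2 else 0)) * x ^ k :=
    sum_congr rfl (fun k hk => by rw [inner k hk])
  rw [expand, expand2]
  have hsplit : ∑ k ∈ range (q + 1),
      (q.choose k : ℝ) * (-(eulerNumber (q - k) : ℝ) + (if q - k = 0 then 2 else 0)) * x ^ k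
      = (∑ k ∈ range (q + 1), -((q.choose k : ℝ) * (eulerNumber (q - k) : ℝ) * x ^ k))
        + ∑ k ∈ range (q + 1), (q.choose k : ℝ) * (if q - k = 0 then 2 else 0) * x ^ k := by
    rw [← sum_add_distrib]
    apply sum_congr rfl
    intro k _
    ring
  rw [hsplit]
  have hif : ∑ k ∈ range (q + 1), (q.choose k : ℝ) * (if q - k = 0 then 2 else 0) * x ^ k
      = 2 * x ^ q := by
    have hcg : ∀ k ∈ range (q + 1), (q.choose k : ℝ) * (if q - k = 0 then 2 else 0) * x ^ k
        = if k = q then 2 * x ^ q else 0 := by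
      intro k hk
      rw [mem_range] at hk
      by_cases h : k = q
      · subst h; rw [if_pos rfl, if_pos (by omega)]; simp
      · rw [if_neg h, if_neg (by omega)]; ring
    rw [sum_congr rfl hcg]
    rw [sum_eq_single q (fun k _ hk => by rw [if_neg hk])
      (fun h => absurd (mem_range.2 (by omega)) h)]
    rw [if_pos rfl]
  rw [hif, eulerPoly_reflect q x, Finset.sum_neg_distrib]
  ring

lemma eulerPoly_zero_eval (q : ℕ) : eulerPoly q 0 = (eulerNumber q : ℝ) := by
  unfold eulerPoly
  rw [sum_eq_single q (fun l hl hlq => by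
      rw [mem_range] at hl
      rw [zero_pow (by omega : q - l ≠ 0), mul_zero])
    (fun h => absurd (mem_range.2 (by omega)) h)]
  simp

lemma telescope (q m : ℕ) :
    ∑ u ∈ range m, (-1 : ℝ) ^ u * (2 * (u : ℝ) ^ q)
      = eulerPoly q 0 - (-1) ^ m * eulerPoly q m := by
  induction m with
  | zero => simp
  | succ m IH =>
    rw [sum_range_succ, IH]
    have h := eulerPoly_succ q (m : ℝ)
    push_cast
    have hpow : (-1 : ℝ) ^ (m + 1) = -(-1) ^ m := by rw [pow_succ]; ring
    rw [hpow, ← h]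
    ring
-- core lemma
lemma core (p : ℕ) (hp : 1 ≤ p) (hE1 : (eulerNumber (p + 1) : ℝ) = 0) (M : ℝ) :
    ∑ l ∈ range (p + 1), (p.choose l : ℝ) * (eulerNumber l : ℝ) * M ^ l *
        (-((eulerNumber (p + 1 - l) : ℝ) + eulerPoly (p + 1 - l) M))
      = M * ((∑ i ∈ range (p + 1), (p.choose i : ℝ) * (eulerNumber (p - i) : ℝ) *
          (eulerNumber i : ℝ) * M ^ (p - i)) - 2 * (eulerNumber p : ℝ)) := by
  have hE0 : (eulerNumber 0 : ℝ) = 1 := by rw [eulerNumber_zero]; norm_num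
  -- Step 1: split each term
  have hterm : ∀ l ∈ range (p + 1),
      (p.choose l : ℝ) * (eulerNumber l : ℝ) * M ^ l *
        (-((eulerNumber (p + 1 - l) : ℝ) + eulerPoly (p + 1 - l) M))
      = -((p.choose l : ℝ) * (eulerNumber l : ℝ) * (eulerNumber (p + 1 - l) : ℝ) * M ^ l)
        - ∑ j ∈ range (p + 2), (p.choose l : ℝ) * (eulerNumber l : ℝ)
            * ((p + 1 - l).choose j : ℝ) * (eulerNumber j : ℝ) * M ^ (p + 1 - j) := by
    intro l hl
    rw [mem_range] at hl
    have h2 : (p.choose l : ℝ) * (eulerNumber l : ℝ) * M ^ l * eulerPoly (p + 1 - l) M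
        = ∑ j ∈ range (p + 2), (p.choose l : ℝ) * (eulerNumber l : ℝ)
            * ((p + 1 - l).choose j : ℝ) * (eulerNumber j : ℝ) * M ^ (p + 1 - j) := by
      unfold eulerPoly
      rw [mul_sum]
      have hstep : ∀ j ∈ range (p + 1 - l + 1),
          (p.choose l : ℝ) * (eulerNumber l : ℝ) * M ^ l *
            (((p + 1 - l).choose j : ℝ) * (eulerNumber j : ℝ) * M ^ (p + 1 - l - j))
          = (p.choose l : ℝ) * (eulerNumber l : ℝ)
            * ((p + 1 - l).choose j : ℝ) * (eulerNumber j : ℝ) * M ^ (p + 1 - j) := by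
        intro j hj
        rw [mem_range] at hj
        rw [show p + 1 - j = l + (p + 1 - l - j) by omega, pow_add]
        ring
      rw [sum_congr rfl hstep]
      refine sum_subset (range_subset_range.2 (by omega)) fun j hj hnj => ?_
      have : (p + 1 - l).choose j = 0 := Nat.choose_eq_zero_of_lt (by rw [mem_range] at *; omega)
      rw [this]
      push_cast
      ring
    rw [mul_neg, mul_add, h2]
    ring
  rw [sum_congr rfl hterm, sum_sub_distrib]
  -- Step 2: swap the double sum and factor
  have hswap : ∑ l ∈ range (p + 1), ∑ j ∈ range (p + 2),
      (p.choose l : ℝ) * (eulerNumber l : ℝ) * ((p + 1 - l).choose j : ℝ)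
        * (eulerNumber j : ℝ) * M ^ (p + 1 - j)
      = ∑ j ∈ range (p + 2),
          (∑ l ∈ range (p + 1), (p.choose l : ℝ) * ((p + 1 - l).choose j : ℝ)
            * (eulerNumber l : ℝ)) * ((eulerNumber j : ℝ) * M ^ (p + 1 - j)) := by
    rw [sum_comm]
    refine sum_congr rfl fun j _ => ?_
    rw [sum_mul]
    refine sum_congr rfl fun l _ => ?_
    ring
  rw [hswap]
  -- Step 3: peel off j = 0 (targeted at the j-sum)
  have hpeel := Finset.sum_range_succ' (fun j =>
      (∑ l ∈ range (p + 1), (p.choose l : ℝ) * ((p + 1 - l).choose j : ℝ)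
        * (eulerNumber l : ℝ)) * ((eulerNumber j : ℝ) * M ^ (p + 1 - j))) (p + 1)
  rw [hpeel]
  have hG0 : (∑ l ∈ range (p + 1), (p.choose l : ℝ) * ((p + 1 - l).choose 0 : ℝ)
      * (eulerNumber l : ℝ)) * ((eulerNumber 0 : ℝ) * M ^ (p + 1 - 0))
      = -(eulerNumber p : ℝ) * M ^ (p + 1) := by
    have : ∀ l ∈ range (p + 1), (p.choose l : ℝ) * ((p + 1 - l).choose 0 : ℝ)
        * (eulerNumber l : ℝ) = (p.choose l : ℝ) * (eulerNumber l : ℝ) := by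
      intro l _
      rw [Nat.choose_zero_right]
      push_cast
      ring
    rw [sum_congr rfl this, euler_rec_real p hp, hE0]
    norm_num
  rw [hG0]
  -- Step 4: evaluate inner sums G(j'+1)
  have Geval : ∀ j' ∈ range (p + 1),
      (∑ l ∈ range (p + 1), (p.choose l : ℝ) * ((p + 1 - l).choose (j' + 1) : ℝ)
        * (eulerNumber l : ℝ))
      = (p.choose j' : ℝ) * (-(eulerNumber (p - j') : ℝ) + (if p - j' = 0 then 2 else 0))
        + (p.choose (j' + 1) : ℝ)
          * (-(eulerNumber (p - j' - 1) : ℝ) + (if p - j' - 1 = 0 then 2 else 0)) := by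
    intro j' hj'
    rw [mem_range] at hj'
    have hpascal : ∀ l ∈ range (p + 1),
        (p.choose l : ℝ) * ((p + 1 - l).choose (j' + 1) : ℝ) * (eulerNumber l : ℝ)
        = (p.choose l : ℝ) * ((p - l).choose j' : ℝ) * (eulerNumber l : ℝ)
          + (p.choose l : ℝ) * ((p - l).choose (j' + 1) : ℝ) * (eulerNumber l : ℝ) := by
      intro l hl
      rw [mem_range] at hl
      rw [show p + 1 - l = (p - l) + 1 by omega, Nat.choose_succ_succ]
      push_cast
      ring
    rw [sum_congr rfl hpascal, sum_add_distrib]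
    have t : ∀ j : ℕ, ∑ l ∈ range (p + 1),
        (p.choose l : ℝ) * ((p - l).choose j : ℝ) * (eulerNumber l : ℝ)
        = (p.choose j : ℝ) * (-(eulerNumber (p - j) : ℝ) + (if p - j = 0 then 2 else 0)) := by
      intro j
      have h1 : ∀ l ∈ range (p + 1),
          (p.choose l : ℝ) * ((p - l).choose j : ℝ) * (eulerNumber l : ℝ)
          = (p.choose j : ℝ) * (((p - j).choose l : ℝ) * (eulerNumber l : ℝ)) := by
        intro l hl
        rw [mem_range] at hl
        have := trinom p l j (by omega)
        have hc := congrArg (fun t : ℕ => (t : ℝ)) this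
        push_cast at hc
        calc (p.choose l : ℝ) * ((p - l).choose j : ℝ) * (eulerNumber l : ℝ)
            = ((p.choose l : ℝ) * ((p - l).choose j : ℝ)) * (eulerNumber l : ℝ) := by ring
          _ = ((p.choose j : ℝ) * ((p - j).choose l : ℝ)) * (eulerNumber l : ℝ) := by rw [hc]
          _ = (p.choose j : ℝ) * (((p - j).choose l : ℝ) * (eulerNumber l : ℝ)) := by ring
      rw [sum_congr rfl h1, ← mul_sum, hsum_eval p (p - j) (by omega)]
    rw [t j', t (j' + 1), show p - (j' + 1) = p - j' - 1 by omega]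
  have hGsum : ∑ j' ∈ range (p + 1),
      (∑ l ∈ range (p + 1), (p.choose l : ℝ) * ((p + 1 - l).choose (j' + 1) : ℝ)
        * (eulerNumber l : ℝ)) * ((eulerNumber (j' + 1) : ℝ) * M ^ (p + 1 - (j' + 1)))
      = ∑ j' ∈ range (p + 1),
        (((p.choose j' : ℝ) * (-(eulerNumber (p - j') : ℝ) + (if p - j' = 0 then 2 else 0))
          + (p.choose (j' + 1) : ℝ)
            * (-(eulerNumber (p - j' - 1) : ℝ) + (if p - j' - 1 = 0 then 2 else 0)))
          * ((eulerNumber (j' + 1) : ℝ) * M ^ (p - j'))) := by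
    refine sum_congr rfl fun j' hj' => ?_
    rw [Geval j' hj', show p + 1 - (j' + 1) = p - j' by omega]
  rw [hGsum]
  -- Step 5: expand into four sums
  have hexpand : ∑ j' ∈ range (p + 1),
      (((p.choose j' : ℝ) * (-(eulerNumber (p - j') : ℝ) + (if p - j' = 0 then 2 else 0))
        + (p.choose (j' + 1) : ℝ)
          * (-(eulerNumber (p - j' - 1) : ℝ) + (if p - j' - 1 = 0 then 2 else 0)))
        * ((eulerNumber (j' + 1) : ℝ) * M ^ (p - j')))
      = (∑ j' ∈ range (p + 1), -((p.choose j' : ℝ) * (eulerNumber (p - j') : ℝ)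
            * (eulerNumber (j' + 1) : ℝ) * M ^ (p - j')))
        + (∑ j' ∈ range (p + 1), (p.choose j' : ℝ) * (if p - j' = 0 then 2 else 0)
            * (eulerNumber (j' + 1) : ℝ) * M ^ (p - j'))
        + (∑ j' ∈ range (p + 1), -((p.choose (j' + 1) : ℝ) * (eulerNumber (p - j' - 1) : ℝ)
            * (eulerNumber (j' + 1) : ℝ) * M ^ (p - j')))
        + (∑ j' ∈ range (p + 1), (p.choose (j' + 1) : ℝ) * (if p - j' - 1 = 0 then 2 else 0)
            * (eulerNumber (j' + 1) : ℝ) * M ^ (p - j')) := by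
    rw [← sum_add_distrib, ← sum_add_distrib, ← sum_add_distrib]
    refine sum_congr rfl fun j' _ => ?_
    ring
  rw [hexpand]
  -- Step 6: the two if-sums
  have hB : ∑ j' ∈ range (p + 1), (p.choose j' : ℝ) * (if p - j' = 0 then 2 else 0)
      * (eulerNumber (j' + 1) : ℝ) * M ^ (p - j') = 0 := by
    refine sum_eq_zero fun j' hj' => ?_
    rw [mem_range] at hj'
    by_cases h : p - j' = 0
    · have hjp : j' = p := by omega
      subst hjp
      rw [hE1]
      ring
    · rw [if_neg h]
      ring
  have hD : ∑ j' ∈ range (p + 1), (p.choose (j' + 1) : ℝ) * (if p - j' - 1 = 0 then 2 else 0)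
      * (eulerNumber (j' + 1) : ℝ) * M ^ (p - j')
      = 2 * (eulerNumber p : ℝ) * M := by
    have hcg : ∀ j' ∈ range (p + 1),
        (p.choose (j' + 1) : ℝ) * (if p - j' - 1 = 0 then 2 else 0)
          * (eulerNumber (j' + 1) : ℝ) * M ^ (p - j')
        = if j' = p - 1 then 2 * (eulerNumber p : ℝ) * M else 0 := by
      intro j' hj'
      rw [mem_range] at hj'
      by_cases h : j' = p - 1
      · subst h
        rw [if_pos (by omega), if_pos rfl]
        rw [show p - 1 + 1 = p by omega, Nat.choose_self, show p - (p - 1) = 1 by omega]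
        push_cast
        ring
      · rw [if_neg h]
        by_cases h2 : p - j' - 1 = 0
        · have hjp : j' = p := by omega
          subst hjp
          rw [Nat.choose_succ_self]
          push_cast
          ring
        · rw [if_neg h2]
          ring
    rw [sum_congr rfl hcg, sum_ite_eq' (range (p + 1)) (p - 1)
      (fun _ => 2 * (eulerNumber p : ℝ) * M), if_pos (mem_range.2 (by omega))]
  rw [hB, hD]
  -- Step 7: S1 reflect
  have hS1 : ∑ l ∈ range (p + 1), -((p.choose l : ℝ) * (eulerNumber l : ℝ)
      * (eulerNumber (p + 1 - l) : ℝ) * M ^ l)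
      = -∑ j' ∈ range (p + 1), (p.choose j' : ℝ) * (eulerNumber (p - j') : ℝ)
        * (eulerNumber (j' + 1) : ℝ) * M ^ (p - j') := by
    rw [Finset.sum_neg_distrib]
    congr 1
    rw [← Finset.sum_range_reflect]
    refine sum_congr rfl fun j' hj' => ?_
    rw [mem_range] at hj'
    rw [show p + 1 - 1 - j' = p - j' by omega, show p + 1 - (p - j') = j' + 1 by omega,
      Nat.choose_symm (by omega : j' ≤ p)]
  have hA' : ∑ j' ∈ range (p + 1), -((p.choose j' : ℝ) * (eulerNumber (p - j') : ℝ)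
        * (eulerNumber (j' + 1) : ℝ) * M ^ (p - j'))
      = -∑ j' ∈ range (p + 1), (p.choose j' : ℝ) * (eulerNumber (p - j') : ℝ)
        * (eulerNumber (j' + 1) : ℝ) * M ^ (p - j') := Finset.sum_neg_distrib _
  rw [hS1, hA']
  -- Step 8: rewrite the C-sum pulling out one factor of M
  have hCc : ∑ j' ∈ range (p + 1), -((p.choose (j' + 1) : ℝ) * (eulerNumber (p - j' - 1) : ℝ)
        * (eulerNumber (j' + 1) : ℝ) * M ^ (p - j'))
      = -(M * ∑ j' ∈ range p, (p.choose (j' + 1) : ℝ) * (eulerNumber (p - j' - 1) : ℝ)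
        * (eulerNumber (j' + 1) : ℝ) * M ^ (p - j' - 1)) := by
    rw [Finset.sum_neg_distrib]
    congr 1
    rw [sum_range_succ, Nat.choose_succ_self]
    push_cast
    rw [mul_sum]
    have hcg : ∀ j' ∈ range p,
        (p.choose (j' + 1) : ℝ) * (eulerNumber (p - j' - 1) : ℝ)
          * (eulerNumber (j' + 1) : ℝ) * M ^ (p - j')
        = M * ((p.choose (j' + 1) : ℝ) * (eulerNumber (p - j' - 1) : ℝ)
          * (eulerNumber (j' + 1) : ℝ) * M ^ (p - j' - 1)) := by
      intro j' hj'
      rw [mem_range] at hj'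
      obtain ⟨t, ht⟩ : ∃ t, p - j' = t + 1 := ⟨p - j' - 1, by omega⟩
      rw [ht, Nat.add_sub_cancel, pow_succ]
      ring
    rw [sum_congr rfl hcg]
    ring
  rw [hCc]
  -- Step 9: peel i = 0 from the RHS sum
  have hRHS : ∑ i ∈ range (p + 1), (p.choose i : ℝ) * (eulerNumber (p - i) : ℝ)
        * (eulerNumber i : ℝ) * M ^ (p - i)
      = (∑ i ∈ range p, (p.choose (i + 1) : ℝ) * (eulerNumber (p - i - 1) : ℝ)
          * (eulerNumber (i + 1) : ℝ) * M ^ (p - i - 1)) + (eulerNumber p : ℝ) * M ^ p := by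
    rw [sum_range_succ']
    have h0 : (p.choose 0 : ℝ) * (eulerNumber (p - 0) : ℝ) * (eulerNumber 0 : ℝ) * M ^ (p - 0)
        = (eulerNumber p : ℝ) * M ^ p := by
      rw [hE0, Nat.choose_zero_right, Nat.sub_zero]
      push_cast
      ring
    rw [h0]
    congr 1
  rw [hRHS]
  ring

/-- The Euler function `Ē_p(x) = (-1)^⌊x⌋ E_p(x - ⌊x⌋)`. -/
noncomputable def eulerFun (p : ℕ) (x : ℝ) : ℝ := (-1 : ℝ) ^ ⌊x⌋ * eulerPoly p (x - ⌊x⌋)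

/-- The Dedekind-type DC sum `T_p(h,k) = 2 ∑_{u=1}^{k-1} (-1)^{u-1} (u/k) Ē_p(hu/k)`. -/
noncomputable def dcSum (p h k : ℕ) : ℝ :=
  2 * ∑ u ∈ Finset.Ico 1 k, (-1 : ℝ) ^ (u - 1) * ((u : ℝ) / k) * eulerFun p (h * u / k)

/-- Theorem 6: for odd `p ≥ 1` and odd positive `m`,
`m^p T_p(1, m) = ∑_{i=0}^{p} C(p,i) E_{p−i} E_i m^{p−i} − 2 E_p`. -/
theorem pow_mul_dcSum_one (p m : ℕ) (hp : 1 ≤ p) (hpodd : Odd p)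
    (hm : 0 < m) (hmodd : Odd m) :
    (m : ℝ) ^ p * dcSum p 1 m =
      ∑ i ∈ Finset.range (p + 1),
          (p.choose i : ℝ) * (eulerNumber (p - i) : ℝ) * (eulerNumber i : ℝ) * (m : ℝ) ^ (p - i)
        - 2 * (eulerNumber p : ℝ) := by
  have hm0 : (m : ℝ) ≠ 0 := Nat.cast_ne_zero.mpr hm.ne'
  have hE1 : (eulerNumber (p + 1) : ℝ) = 0 := by
    exact_mod_cast congrArg (fun q : ℚ => (q : ℝ))
      (euler_even_zero (p + 1) (by omega) (Odd.add_one hpodd))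
  -- inner alternating sum evaluation
  have inner : ∀ q : ℕ, 1 ≤ q →
      ∑ u ∈ Finset.Ico 1 m, (-1 : ℝ) ^ (u - 1) * (2 * (u : ℝ) ^ q)
        = -((eulerNumber q : ℝ) + eulerPoly q (m : ℝ)) := by
    intro q hq
    have hsign : ∀ u ∈ Finset.Ico 1 m, (-1 : ℝ) ^ (u - 1) * (2 * (u : ℝ) ^ q)
        = -((-1 : ℝ) ^ u * (2 * (u : ℝ) ^ q)) := by
      intro u hu
      rw [Finset.mem_Ico] at hu
      obtain ⟨v, rfl⟩ : ∃ v, u = v + 1 := ⟨u - 1, by omega⟩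
      rw [Nat.add_sub_cancel, pow_succ]
      ring
    have hext : ∑ u ∈ range m, (-1 : ℝ) ^ u * (2 * (u : ℝ) ^ q)
        = ∑ u ∈ Finset.Ico 1 m, (-1 : ℝ) ^ u * (2 * (u : ℝ) ^ q) := by
      rw [range_eq_Ico, ← Finset.sum_Ico_consecutive _ (Nat.zero_le 1) (by omega : 1 ≤ m)]
      have h01 : ∑ u ∈ Finset.Ico (0 : ℕ) 1, (-1 : ℝ) ^ u * (2 * (u : ℝ) ^ q) = 0 := by
        rw [Nat.Ico_zero_eq_range, sum_range_one]
        rw [Nat.cast_zero, zero_pow (by omega : q ≠ 0)]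
        norm_num
      rw [h01, zero_add]
    rw [sum_congr rfl hsign, Finset.sum_neg_distrib, ← hext, telescope q m,
      eulerPoly_zero_eval, hmodd.neg_one_pow]
    ring
  -- main computation with one extra power of m
  have main : (m : ℝ) ^ (p + 1) * dcSum p 1 m
      = ∑ l ∈ range (p + 1), (p.choose l : ℝ) * (eulerNumber l : ℝ) * (m : ℝ) ^ l *
          (-((eulerNumber (p + 1 - l) : ℝ) + eulerPoly (p + 1 - l) (m : ℝ))) := by
    unfold dcSum
    have hfun : ∀ u ∈ Finset.Ico 1 m,
        (-1 : ℝ) ^ (u - 1) * ((u : ℝ) / m) * eulerFun p (((1 : ℕ) : ℝ) * u / m)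
        = (-1 : ℝ) ^ (u - 1) * ((u : ℝ) / m) * eulerPoly p ((u : ℝ) / m) := by
      intro u hu
      rw [Finset.mem_Ico] at hu
      have harg : ((1 : ℕ) : ℝ) * u / m = (u : ℝ) / m := by push_cast; ring
      have hfl : ⌊(u : ℝ) / m⌋ = 0 := by
        rw [Int.floor_eq_zero_iff]
        constructor
        · positivity
        · rw [div_lt_one (by positivity)]
          exact_mod_cast hu.2
      rw [harg]
      unfold eulerFun
      rw [hfl]
      norm_num
    rw [sum_congr rfl hfun]
    have hx : ∀ u ∈ Finset.Ico 1 m,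
        (m : ℝ) ^ (p + 1) * (2 * ((-1 : ℝ) ^ (u - 1) * ((u : ℝ) / m) * eulerPoly p ((u : ℝ) / m)))
        = ∑ l ∈ range (p + 1), (p.choose l : ℝ) * (eulerNumber l : ℝ) * (m : ℝ) ^ l *
            ((-1 : ℝ) ^ (u - 1) * (2 * (u : ℝ) ^ (p + 1 - l))) := by
      intro u hu
      unfold eulerPoly
      simp only [Finset.mul_sum]
      refine sum_congr rfl fun l hl => ?_
      rw [mem_range] at hl
      rw [show p + 1 = l + (p - l) + 1 by omega, pow_add ((m:ℝ)), pow_succ,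
        show l + (p - l) + 1 - l = (p - l) + 1 by omega, pow_succ ((u:ℝ)), div_pow]
      have hml : (m : ℝ) ^ (p - l) ≠ 0 := pow_ne_zero _ hm0
      field_simp
      ring
    rw [Finset.mul_sum, Finset.mul_sum, sum_congr rfl hx, sum_comm]
    refine sum_congr rfl fun l hl => ?_
    rw [mem_range] at hl
    rw [← Finset.mul_sum, inner (p + 1 - l) (by omega)]
  -- conclude by cancelling one m
  have key : (m : ℝ) ^ (p + 1) * dcSum p 1 m
      = (m : ℝ) * ((∑ i ∈ range (p + 1), (p.choose i : ℝ) * (eulerNumber (p - i) : ℝ) *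
          (eulerNumber i : ℝ) * (m : ℝ) ^ (p - i)) - 2 * (eulerNumber p : ℝ)) := by
    rw [main]
    exact core p hp hE1 (m : ℝ)
  have hcancel : (m : ℝ) * ((m : ℝ) ^ p * dcSum p 1 m)
      = (m : ℝ) * ((∑ i ∈ range (p + 1), (p.choose i : ℝ) * (eulerNumber (p - i) : ℝ) *
          (eulerNumber i : ℝ) * (m : ℝ) ^ (p - i)) - 2 * (eulerNumber p : ℝ)) := by
    rw [← key, pow_succ]
    ring
  have := mul_left_cancel₀ hm0 hcancel
  linarith [this]
end

section
/- (Theorem 8) Let h and k be odd positive integers and let p ≥ 1 be an integer. Then k^p T_p(h, k) + h^p T_p(k, h) = 2 (hk)^{p−1} Σ_{u=0}^{k−1} Σ_{v=0}^{h−1} (−1)^{u+v−1} (uh + vk) Ē_p(u/k + v/h). -/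
open Finset

lemma eulerNumber_rec (n : ℕ) :
    ∑ l ∈ Finset.range (n + 1), (((n+1).choose l : ℝ)) * (eulerNumber l : ℝ)
      = -2 * (eulerNumber (n+1) : ℝ) := by
  have h1 : ∑ l : Fin (n+1), ((n + 1).choose (l : ℕ) : ℚ) * eulerNumber l
      = ∑ l ∈ Finset.range (n + 1), ((n + 1).choose l : ℚ) * eulerNumber l :=
    Fin.sum_univ_eq_sum_range (fun l => ((n + 1).choose l : ℚ) * eulerNumber l) (n+1)
  have : (eulerNumber (n+1) : ℚ) = -(∑ l ∈ Finset.range (n + 1), ((n + 1).choose l : ℚ) * eulerNumber l) / 2 := by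
    rw [eulerNumber, h1]
  have h2 : (∑ l ∈ Finset.range (n + 1), ((n + 1).choose l : ℚ) * eulerNumber l) = -2 * eulerNumber (n+1) := by
    rw [this]; ring
  calc ∑ l ∈ Finset.range (n + 1), (((n+1).choose l : ℝ)) * (eulerNumber l : ℝ)
      = ((∑ l ∈ Finset.range (n + 1), ((n + 1).choose l : ℚ) * eulerNumber l : ℚ) : ℝ) := by
        push_cast; ring
    _ = _ := by rw [h2]; push_cast; ring

lemma eulerPoly_zero (n : ℕ) : eulerPoly n 0 = (eulerNumber n : ℝ) := by
  rw [eulerPoly, Finset.sum_eq_single n]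
  · simp
  · intro l hl hne
    have hlt : l < n := lt_of_le_of_ne (Nat.lt_succ_iff.mp (Finset.mem_range.mp hl)) hne
    have : n - l ≠ 0 := by omega
    rw [zero_pow this, mul_zero]
  · intro hn; exact absurd (Finset.self_mem_range_succ n) hn

lemma eulerPoly_one (n : ℕ) : eulerPoly (n+1) 1 = -(eulerNumber (n+1) : ℝ) := by
  have h := eulerNumber_rec n
  rw [eulerPoly, Finset.sum_range_succ]
  simp only [one_pow, mul_one, Nat.choose_self, Nat.cast_one, one_mul]
  rw [h]; ring

lemma choose_id (n l : ℕ) (hl : l ≤ n) : (n+1).choose l * (n+1-l) = (n+1) * n.choose l := by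
  have h3 : n.choose (n - l) = n.choose l := Nat.choose_symm hl
  have h4 : (n+1).choose (n+1-l) = (n+1).choose l := Nat.choose_symm (by omega)
  have h5 : n + 1 - l = n - l + 1 := by omega
  calc (n+1).choose l * (n+1-l) = (n+1).choose (n-l+1) * (n-l+1) := by rw [← h4, h5]
    _ = (n+1) * n.choose (n-l) := (Nat.add_one_mul_choose_eq n (n-l)).symm
    _ = (n+1) * n.choose l := by rw [h3]

lemma hasDerivAt_eulerPoly (n : ℕ) (x : ℝ) :
    HasDerivAt (eulerPoly (n+1)) ((n+1 : ℝ) * eulerPoly n x) x := by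
  have h : ∀ l ∈ Finset.range (n+2),
      HasDerivAt (fun y : ℝ => ((n+1).choose l : ℝ) * (eulerNumber l : ℝ) * y ^ (n+1-l))
        (((n+1).choose l : ℝ) * (eulerNumber l : ℝ) * (((n+1-l : ℕ) : ℝ) * x ^ (n+1-l-1))) x :=
    fun l _ => ((hasDerivAt_pow (n+1-l) x).const_mul _)
  have hs := HasDerivAt.fun_sum h
  have hfun : eulerPoly (n+1) = fun y : ℝ => ∑ l ∈ Finset.range (n+2),
      ((n+1).choose l : ℝ) * (eulerNumber l : ℝ) * y ^ (n+1-l) := rfl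
  rw [hfun]
  refine hs.congr_deriv ?_
  symm
  rw [Finset.sum_range_succ]
  simp only [Nat.sub_self, Nat.cast_zero, zero_mul, mul_zero, add_zero]
  rw [eulerPoly, Finset.mul_sum]
  apply Finset.sum_congr rfl
  intro l hl
  have hl' : l ≤ n := Nat.lt_succ_iff.mp (Finset.mem_range.mp hl)
  have hc : (((n+1).choose l : ℕ) : ℝ) * ((n+1-l : ℕ) : ℝ) = ((n+1 : ℕ) : ℝ) * (n.choose l : ℝ) := by
    rw [← Nat.cast_mul, ← Nat.cast_mul, choose_id n l hl']
  have he : n+1-l-1 = n-l := by omega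
  rw [he]
  have : ((n + 1).choose l : ℝ) * (eulerNumber l:ℝ) * (((n+1-l:ℕ):ℝ) * x ^ (n - l))
      = (((n+1).choose l : ℝ) * ((n+1-l:ℕ):ℝ)) * ((eulerNumber l:ℝ) * x^(n-l)) := by ring
  rw [this, hc]
  push_cast
  ring

lemma eulerPoly_zero_one (x : ℝ) : eulerPoly 0 x = 1 := by
  simp [eulerPoly, eulerNumber]

lemma eulerPoly_add_one (n : ℕ) (x : ℝ) : eulerPoly n (x+1) + eulerPoly n x = 2 * x^n := by
  induction n generalizing x with
  | zero => rw [eulerPoly_zero_one, eulerPoly_zero_one]; norm_num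
  | succ n ih =>
    set f : ℝ → ℝ := fun y => eulerPoly (n+1) (y+1) + eulerPoly (n+1) y - 2*y^(n+1) with hf
    have hder : ∀ y, HasDerivAt f 0 y := by
      intro y
      have h1 : HasDerivAt (fun y : ℝ => eulerPoly (n+1) (y+1)) ((n+1:ℝ) * eulerPoly n (y+1)) y := by
        have := (hasDerivAt_eulerPoly n (y+1)).comp y ((hasDerivAt_id y).add_const 1)
        simp only [mul_one] at this; exact this
      have h2 := hasDerivAt_eulerPoly n y
      have h3 : HasDerivAt (fun y : ℝ => 2*y^(n+1)) (2*(((n+1:ℕ):ℝ)*y^n)) y :=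
        (hasDerivAt_pow (n+1) y).const_mul 2
      have h4 := (h1.add h2).sub h3
      have : (n+1:ℝ) * eulerPoly n (y+1) + (n+1:ℝ) * eulerPoly n y - 2*(((n+1:ℕ):ℝ)*y^n) = 0 := by
        have hiy := ih y
        push_cast
        nlinarith [hiy]
      rwa [this] at h4
    have hconst : f x = f 0 :=
      is_const_of_deriv_eq_zero (fun y => (hder y).differentiableAt) (fun y => (hder y).deriv) x 0
    have hf0 : f 0 = 0 := by
      simp only [hf, zero_add, eulerPoly_one, eulerPoly_zero]
      ring
    have hfx : f x = 0 := hconst.trans hf0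
    simp only [hf] at hfx
    linarith

lemma telescope_s11 (A : ℕ → ℝ) (m : ℕ) :
    ∑ v ∈ Finset.range m, (-1:ℝ)^v * (A v + A (v+1)) = A 0 - (-1:ℝ)^m * A m := by
  induction m with
  | zero => simp
  | succ m ih => rw [Finset.sum_range_succ, ih, pow_succ]; ring

lemma eulerPoly_mult (m : ℕ) (hm : Odd m) (p : ℕ) (x : ℝ) :
    (m:ℝ)^p * ∑ v ∈ Finset.range m, (-1:ℝ)^v * eulerPoly p (x + v/m) = eulerPoly p (m*x) := by
  have hm0 : m ≠ 0 := by rintro rfl; simp at hm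
  have hmR : (m:ℝ) ≠ 0 := Nat.cast_ne_zero.mpr hm0
  induction p generalizing x with
  | zero =>
    simp only [eulerPoly_zero_one, mul_one, pow_zero, one_mul]
    rw [neg_one_geom_sum, if_neg (Nat.not_even_iff_odd.mpr hm)]
  | succ p ih =>
    set F : ℝ → ℝ := fun y =>
      (m:ℝ)^(p+1) * ∑ v ∈ Finset.range m, (-1:ℝ)^v * eulerPoly (p+1) (y + v/m)
        - eulerPoly (p+1) ((m:ℝ)*y) with hF
    have hder : ∀ y, HasDerivAt F 0 y := by
      intro y
      have h1 : ∀ v ∈ Finset.range m, HasDerivAt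
          (fun y : ℝ => (-1:ℝ)^v * eulerPoly (p+1) (y + v/m))
          ((-1:ℝ)^v * ((p+1:ℝ) * eulerPoly p (y + v/m))) y := by
        intro v _
        have := ((hasDerivAt_eulerPoly p (y + v/m)).comp y ((hasDerivAt_id y).add_const ((v:ℝ)/m))).const_mul ((-1:ℝ)^v)
        simp only [mul_one] at this; exact this
      have h2 := (HasDerivAt.fun_sum h1).const_mul ((m:ℝ)^(p+1))
      have h3 : HasDerivAt (fun y : ℝ => eulerPoly (p+1) ((m:ℝ)*y))
          (((p+1:ℝ) * eulerPoly p ((m:ℝ)*y)) * (m:ℝ)) y := by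
        have hmy : HasDerivAt (fun y : ℝ => (m:ℝ)*y) (m:ℝ) y := by
          simpa using (hasDerivAt_id y).const_mul (m:ℝ)
        exact (hasDerivAt_eulerPoly p ((m:ℝ)*y)).comp y hmy
      have h4 := h2.sub h3
      have hval : (m:ℝ)^(p+1) * (∑ v ∈ Finset.range m, (-1:ℝ)^v * ((p+1:ℝ) * eulerPoly p (y + v/m)))
          - ((p+1:ℝ) * eulerPoly p ((m:ℝ)*y)) * (m:ℝ) = 0 := by
        have hiy := ih y
        have hsum : ∑ v ∈ Finset.range m, (-1:ℝ)^v * ((p+1:ℝ) * eulerPoly p (y + v/m))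
            = (p+1:ℝ) * ∑ v ∈ Finset.range m, (-1:ℝ)^v * eulerPoly p (y + v/m) := by
          rw [Finset.mul_sum]; apply Finset.sum_congr rfl; intro v _; ring
        rw [hsum]
        linear_combination ((p:ℝ)+1) * (m:ℝ) * hiy
      rwa [hval] at h4
    have hconst : F x = F (x + 1/m) :=
      is_const_of_deriv_eq_zero (fun y => (hder y).differentiableAt) (fun y => (hder y).deriv) x (x+1/m)
    have hsum2 : F x + F (x + 1/m) = 0 := by
      set A : ℕ → ℝ := fun v => eulerPoly (p+1) (x + v/m) with hA
      have htel := telescope_s11 A m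
      have hshift : ∀ v : ℕ, x + 1/m + (v:ℝ)/m = x + ((v+1 : ℕ):ℝ)/m := by
        intro v; push_cast; field_simp; ring
      have h1 : ∑ v ∈ Finset.range m, (-1:ℝ)^v * eulerPoly (p+1) (x + 1/m + v/m)
          = ∑ v ∈ Finset.range m, (-1:ℝ)^v * A (v+1) :=
        Finset.sum_congr rfl (fun v _ => by rw [hshift v])
      have h2 : ∑ v ∈ Finset.range m, (-1:ℝ)^v * (A v + A (v+1))
          = (∑ v ∈ Finset.range m, (-1:ℝ)^v * A v) + ∑ v ∈ Finset.range m, (-1:ℝ)^v * A (v+1) := by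
        rw [← Finset.sum_add_distrib]
        exact Finset.sum_congr rfl (fun v _ => by ring)
      have hsplit : F x + F (x + 1/m)
          = (m:ℝ)^(p+1) * ∑ v ∈ Finset.range m, (-1:ℝ)^v * (A v + A (v+1))
            - (eulerPoly (p+1) ((m:ℝ)*x) + eulerPoly (p+1) ((m:ℝ)*(x+1/m))) := by
        simp only [hF]
        rw [h1, h2]
        simp only [hA]
        ring
      rw [hsplit, htel]
      have hAm : A m = eulerPoly (p+1) (x + 1) := by
        simp only [hA]; rw [div_self hmR]
      have hA0 : A 0 = eulerPoly (p+1) x := by simp [hA]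
      have hodd : (-1:ℝ)^m = -1 := Odd.neg_one_pow hm
      rw [hAm, hA0, hodd]
      have e1 : eulerPoly (p+1) (x+1) + eulerPoly (p+1) x = 2 * x^(p+1) := eulerPoly_add_one (p+1) x
      have e2 : eulerPoly (p+1) ((m:ℝ)*x + 1) + eulerPoly (p+1) ((m:ℝ)*x) = 2 * ((m:ℝ)*x)^(p+1) :=
        eulerPoly_add_one (p+1) ((m:ℝ)*x)
      have hmx : (m:ℝ)*(x+1/m) = (m:ℝ)*x + 1 := by field_simp
      rw [hmx]
      linear_combination ((m:ℝ))^(p+1) * e1 - e2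
    have hFx : F x = 0 := by rw [← hconst] at hsum2; linarith
    simp only [hF] at hFx
    linarith

lemma eulerFun_of_Ico (p : ℕ) (x : ℝ) (h0 : 0 ≤ x) (h1 : x < 1) : eulerFun p x = eulerPoly p x := by
  have : ⌊x⌋ = 0 := Int.floor_eq_zero_iff.mpr ⟨h0, h1⟩
  rw [eulerFun, this]
  norm_num

lemma eulerFun_add_one (p : ℕ) (x : ℝ) : eulerFun p (x+1) = -eulerFun p x := by
  rw [eulerFun, eulerFun, Int.floor_add_one]
  have h2 : (-1:ℝ)^(⌊x⌋+1) = -(-1:ℝ)^⌊x⌋ := by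
    rw [zpow_add_one₀ (by norm_num : (-1:ℝ) ≠ 0)]; ring
  rw [h2]
  have h3 : x + 1 - ((⌊x⌋:ℤ) + 1 : ℤ) = x - ⌊x⌋ := by push_cast; ring
  rw [h3]
  ring

lemma eulerFun_mult (m p : ℕ) (hm : Odd m) (x : ℝ) :
    (m:ℝ)^p * ∑ v ∈ Finset.range m, (-1:ℝ)^v * eulerFun p (x + v/m) = eulerFun p ((m:ℝ)*x) := by
  have hm0 : m ≠ 0 := by rintro rfl; simp at hm
  have hmR : (m:ℝ) ≠ 0 := Nat.cast_ne_zero.mpr hm0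
  have hmpos : (0:ℝ) < m := by positivity
  set G : ℝ → ℝ := fun y =>
    (m:ℝ)^p * ∑ v ∈ Finset.range m, (-1:ℝ)^v * eulerFun p (y + v/m) - eulerFun p ((m:ℝ)*y) with hG
  have hstep : ∀ y : ℝ, G (y + 1/m) = - G y := by
    intro y
    have hshift : ∀ v : ℕ, y + 1/m + (v:ℝ)/m = y + ((v+1 : ℕ):ℝ)/m := by
      intro v; push_cast; field_simp; ring
    set B : ℕ → ℝ := fun v => eulerFun p (y + v/m) with hB
    have htel := telescope_s11 B m
    have hBm : B m = - B 0 := by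
      simp only [hB, Nat.cast_zero, zero_div, add_zero]
      rw [div_self hmR]
      exact eulerFun_add_one p y
    rw [hBm, Odd.neg_one_pow hm] at htel
    have hsum0 : ∑ v ∈ Finset.range m, (-1:ℝ)^v * (B v + B (v+1)) = 0 := by
      rw [htel]; ring
    have h2 : ∑ v ∈ Finset.range m, (-1:ℝ)^v * (B v + B (v+1))
        = (∑ v ∈ Finset.range m, (-1:ℝ)^v * B v) + ∑ v ∈ Finset.range m, (-1:ℝ)^v * B (v+1) := by
      rw [← Finset.sum_add_distrib]
      exact Finset.sum_congr rfl (fun v _ => by ring)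
    have h1 : ∑ v ∈ Finset.range m, (-1:ℝ)^v * eulerFun p (y + 1/m + v/m)
        = ∑ v ∈ Finset.range m, (-1:ℝ)^v * B (v+1) :=
      Finset.sum_congr rfl (fun v _ => by rw [hshift v])
    have hS : ∑ v ∈ Finset.range m, (-1:ℝ)^v * eulerFun p (y + 1/m + v/m)
        = - ∑ v ∈ Finset.range m, (-1:ℝ)^v * B v := by
      rw [h1]; linarith [h2.symm.trans hsum0]
    have hmy : (m:ℝ)*(y + 1/m) = (m:ℝ)*y + 1 := by field_simp
    simp only [hG]
    rw [hS, hmy, eulerFun_add_one]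
    simp only [hB]
    ring
  have hbase : ∀ y : ℝ, 0 ≤ y → y < 1/m → G y = 0 := by
    intro y h0 h1
    have hmy0 : 0 ≤ (m:ℝ)*y := by positivity
    have hmy1 : (m:ℝ)*y < 1 := by
      rw [lt_div_iff₀ hmpos] at h1; linarith [h1]
    have hx : ∀ v ∈ Finset.range m, (-1:ℝ)^v * eulerFun p (y + v/m) = (-1:ℝ)^v * eulerPoly p (y + v/m) := by
      intro v hv
      have hv' : (v:ℝ) ≤ (m:ℝ) - 1 := by
        have h5 : v + 1 ≤ m := Finset.mem_range.mp hv
        have h6 : ((v:ℕ):ℝ) + 1 ≤ ((m:ℕ):ℝ) := by exact_mod_cast Nat.cast_le.mpr h5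
        linarith
      have e1 : eulerFun p (y + v/m) = eulerPoly p (y + v/m) := by
        apply eulerFun_of_Ico
        · positivity
        · have h7 : (v:ℝ)/m ≤ ((m:ℝ)-1)/m := by
            apply (div_le_div_iff_of_pos_right hmpos).mpr hv'
          have h8 : ((m:ℝ)-1)/m = 1 - 1/m := by field_simp
          linarith
      rw [e1]
    have e2 : eulerFun p ((m:ℝ)*y) = eulerPoly p ((m:ℝ)*y) := eulerFun_of_Ico p _ hmy0 hmy1
    simp only [hG]
    rw [Finset.sum_congr rfl hx, e2, eulerPoly_mult m hm p y]
    ring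
  have key : ∀ j : ℤ, ∀ y : ℝ, G y = 0 → G (y + (j:ℝ)/m) = 0 := by
    intro j
    induction j using Int.induction_on with
    | zero => intro y hy; simpa using hy
    | succ i ih =>
      intro y hy
      have h1 := hstep (y + ((i:ℤ):ℝ)/m)
      have harg : y + ((i:ℤ):ℝ)/m + 1/m = y + (((i:ℤ)+1 : ℤ):ℝ)/m := by
        push_cast; field_simp; ring
      rw [harg] at h1
      rw [h1, ih y hy, neg_zero]
    | pred i ih =>
      intro y hy
      have h1 := hstep (y + ((-(i:ℤ)-1 : ℤ):ℝ)/m)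
      have harg : y + ((-(i:ℤ)-1:ℤ):ℝ)/m + 1/m = y + ((-(i:ℤ) : ℤ):ℝ)/m := by
        push_cast; field_simp; ring
      rw [harg] at h1
      have h2 := ih y hy
      rw [h2] at h1
      linarith [h1]
  set j := ⌊(m:ℝ)*x⌋ with hj
  set y := x - (j:ℝ)/m with hy
  have hy0 : 0 ≤ y := by
    have h1 : (j:ℝ) ≤ (m:ℝ)*x := Int.floor_le _
    have h2 : (j:ℝ)/m ≤ x := by
      rw [div_le_iff₀ hmpos]; linarith
    simp only [hy]; linarith
  have hy1 : y < 1/m := by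
    have h1 : (m:ℝ)*x < (j:ℝ) + 1 := Int.lt_floor_add_one _
    have h2 : x < ((j:ℝ)+1)/m := by
      rw [lt_div_iff₀ hmpos, mul_comm]; linarith
    have h3 : ((j:ℝ)+1)/m = 1/m + (j:ℝ)/m := by ring
    simp only [hy]; linarith
  have hgx : G x = 0 := by
    have h3 := key j y (hbase y hy0 hy1)
    have h4 : y + (j:ℝ)/m = x := by simp only [hy]; ring
    rwa [h4] at h3
  simp only [hG] at hgx
  linarith


lemma dcSum_side (a b q : ℕ) (hb : 0 < b) :
    (b:ℝ)^(q+1) * dcSum (q+1) a b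
      = 2 * (b:ℝ)^q * ∑ u ∈ Finset.range b, (-1:ℝ)^(u+1) * (u:ℝ) * eulerFun (q+1) ((a:ℝ)*u/b) := by
  have hbR : (b:ℝ) ≠ 0 := Nat.cast_ne_zero.mpr hb.ne'
  have h1 : ∑ u ∈ Finset.range b, (-1:ℝ)^(u+1) * (u:ℝ) * eulerFun (q+1) ((a:ℝ)*u/b)
      = ∑ u ∈ Finset.Ico 1 b, (-1:ℝ)^(u+1) * (u:ℝ) * eulerFun (q+1) ((a:ℝ)*u/b) := by
    rw [Finset.range_eq_Ico, Finset.sum_eq_sum_Ico_succ_bot hb]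
    norm_num
  rw [h1, dcSum]
  calc (b:ℝ)^(q+1) * (2 * ∑ u ∈ Finset.Ico 1 b, (-1:ℝ)^(u-1) * ((u:ℝ)/b) * eulerFun (q+1) ((a:ℝ)*u/b))
      = 2 * ∑ u ∈ Finset.Ico 1 b, (b:ℝ)^(q+1) * ((-1:ℝ)^(u-1) * ((u:ℝ)/b) * eulerFun (q+1) ((a:ℝ)*u/b)) := by
        rw [← mul_assoc, mul_comm ((b:ℝ)^(q+1)) 2, mul_assoc, Finset.mul_sum]
    _ = 2 * ∑ u ∈ Finset.Ico 1 b, (b:ℝ)^q * ((-1:ℝ)^(u+1) * (u:ℝ) * eulerFun (q+1) ((a:ℝ)*u/b)) := by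
        refine congrArg _ (Finset.sum_congr rfl fun u hu => ?_)
        have hu1 : 1 ≤ u := (Finset.mem_Ico.mp hu).1
        have hsgn : (-1:ℝ)^(u-1) = (-1:ℝ)^(u+1) := by
          have he : u + 1 = (u - 1) + 2 := by omega
          rw [he, pow_add]; norm_num
        have hb1 : (b:ℝ)^(q+1) * ((u:ℝ)/b) = (b:ℝ)^q * u := by
          field_simp
          ring
        calc (b:ℝ)^(q+1) * ((-1:ℝ)^(u-1) * ((u:ℝ)/b) * eulerFun (q+1) ((a:ℝ)*u/b))
            = ((b:ℝ)^(q+1) * ((u:ℝ)/b)) * ((-1:ℝ)^(u-1) * eulerFun (q+1) ((a:ℝ)*u/b)) := by ring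
          _ = ((b:ℝ)^q * u) * ((-1:ℝ)^(u+1) * eulerFun (q+1) ((a:ℝ)*u/b)) := by rw [hb1, hsgn]
          _ = (b:ℝ)^q * ((-1:ℝ)^(u+1) * (u:ℝ) * eulerFun (q+1) ((a:ℝ)*u/b)) := by ring
    _ = 2 * (b:ℝ)^q * ∑ u ∈ Finset.Ico 1 b, (-1:ℝ)^(u+1) * (u:ℝ) * eulerFun (q+1) ((a:ℝ)*u/b) := by
        rw [← Finset.mul_sum, ← mul_assoc, mul_comm 2 ((b:ℝ)^q), mul_assoc]


/-- Theorem 8: for odd positive `h, k` and `p ≥ 1`,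
`k^p T_p(h,k) + h^p T_p(k,h)
  = 2 (hk)^{p−1} ∑_{u=0}^{k−1} ∑_{v=0}^{h−1} (−1)^{u+v−1} (uh + vk) Ē_p(u/k + v/h)`. -/
theorem dcSum_reciprocity_aux (h k p : ℕ) (hh : 0 < h) (hk : 0 < k)
    (hhodd : Odd h) (hkodd : Odd k) (hp : 1 ≤ p) :
    (k : ℝ) ^ p * dcSum p h k + (h : ℝ) ^ p * dcSum p k h =
      2 * ((h : ℝ) * k) ^ (p - 1) *
        ∑ u ∈ Finset.range k, ∑ v ∈ Finset.range h,
          (-1 : ℝ) ^ (u + v + 1) * ((u : ℝ) * h + (v : ℝ) * k) *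
            eulerFun p ((u : ℝ) / k + (v : ℝ) / h) := by
  obtain ⟨q, rfl⟩ : ∃ q, p = q + 1 := ⟨p - 1, by omega⟩
  have hq : q + 1 - 1 = q := rfl
  rw [hq]
  have hkR : (k:ℝ) ≠ 0 := Nat.cast_ne_zero.mpr hk.ne'
  have hhR : (h:ℝ) ≠ 0 := Nat.cast_ne_zero.mpr hh.ne'
  have hhpow : (h:ℝ)^(q+1) ≠ 0 := pow_ne_zero _ hhR
  have hkpow : (k:ℝ)^(q+1) ≠ 0 := pow_ne_zero _ hkR
  -- inner sums via the multiplication theorem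
  have minner1 : ∀ u : ℕ, ∑ v ∈ Finset.range h, (-1:ℝ)^v * eulerFun (q+1) ((u:ℝ)/k + (v:ℝ)/h)
      = eulerFun (q+1) ((h:ℝ)*u/k) / (h:ℝ)^(q+1) := by
    intro u
    have hmu := eulerFun_mult h (q+1) hhodd ((u:ℝ)/k)
    rw [← mul_div_assoc] at hmu
    rw [eq_div_iff hhpow]
    linarith [hmu]
  have minner2 : ∀ v : ℕ, ∑ u ∈ Finset.range k, (-1:ℝ)^u * eulerFun (q+1) ((u:ℝ)/k + (v:ℝ)/h)
      = eulerFun (q+1) ((k:ℝ)*v/h) / (k:ℝ)^(q+1) := by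
    intro v
    have hmu := eulerFun_mult k (q+1) hkodd ((v:ℝ)/h)
    rw [← mul_div_assoc] at hmu
    have hc : ∑ u ∈ Finset.range k, (-1:ℝ)^u * eulerFun (q+1) ((u:ℝ)/k + (v:ℝ)/h)
        = ∑ u ∈ Finset.range k, (-1:ℝ)^u * eulerFun (q+1) ((v:ℝ)/h + (u:ℝ)/k) :=
      Finset.sum_congr rfl (fun u _ => by rw [add_comm ((u:ℝ)/k) ((v:ℝ)/h)])
    rw [hc, eq_div_iff hkpow]
    linarith [hmu]
  -- split the double sum
  have e0 : ∀ u v : ℕ, (-1:ℝ)^(u+v+1) * ((u:ℝ)*h + (v:ℝ)*k) * eulerFun (q+1) ((u:ℝ)/k + (v:ℝ)/h)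
      = (-1:ℝ)^(u+1)*(u:ℝ)*(h:ℝ)*((-1:ℝ)^v * eulerFun (q+1) ((u:ℝ)/k + (v:ℝ)/h))
        + (-1:ℝ)^(v+1)*(v:ℝ)*(k:ℝ)*((-1:ℝ)^u * eulerFun (q+1) ((u:ℝ)/k + (v:ℝ)/h)) := by
    intro u v; ring
  have hRHS : ∑ u ∈ Finset.range k, ∑ v ∈ Finset.range h,
        (-1:ℝ)^(u+v+1) * ((u:ℝ)*h + (v:ℝ)*k) * eulerFun (q+1) ((u:ℝ)/k + (v:ℝ)/h)
      = (∑ u ∈ Finset.range k, (-1:ℝ)^(u+1)*(u:ℝ)*(h:ℝ)*(eulerFun (q+1) ((h:ℝ)*u/k) / (h:ℝ)^(q+1)))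
        + (∑ v ∈ Finset.range h, (-1:ℝ)^(v+1)*(v:ℝ)*(k:ℝ)*(eulerFun (q+1) ((k:ℝ)*v/h) / (k:ℝ)^(q+1))) := by
    have hsplit : ∑ u ∈ Finset.range k, ∑ v ∈ Finset.range h,
          (-1:ℝ)^(u+v+1) * ((u:ℝ)*h + (v:ℝ)*k) * eulerFun (q+1) ((u:ℝ)/k + (v:ℝ)/h)
        = (∑ u ∈ Finset.range k, ∑ v ∈ Finset.range h,
            (-1:ℝ)^(u+1)*(u:ℝ)*(h:ℝ)*((-1:ℝ)^v * eulerFun (q+1) ((u:ℝ)/k + (v:ℝ)/h)))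
          + (∑ u ∈ Finset.range k, ∑ v ∈ Finset.range h,
            (-1:ℝ)^(v+1)*(v:ℝ)*(k:ℝ)*((-1:ℝ)^u * eulerFun (q+1) ((u:ℝ)/k + (v:ℝ)/h))) := by
      rw [← Finset.sum_add_distrib]
      refine Finset.sum_congr rfl fun u _ => ?_
      rw [← Finset.sum_add_distrib]
      exact Finset.sum_congr rfl fun v _ => e0 u v
    rw [hsplit]
    congr 1
    · refine Finset.sum_congr rfl fun u _ => ?_
      rw [← Finset.mul_sum, minner1 u]
    · rw [Finset.sum_comm]
      refine Finset.sum_congr rfl fun v _ => ?_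
      rw [← Finset.mul_sum, minner2 v]
  rw [hRHS]
  rw [dcSum_side h k q hk, dcSum_side k h q hh]
  rw [mul_add]
  congr 1
  · rw [Finset.mul_sum, Finset.mul_sum]
    refine Finset.sum_congr rfl fun u _ => ?_
    have : ((h:ℝ)*k)^q = (h:ℝ)^q * (k:ℝ)^q := mul_pow _ _ _
    field_simp
    ring
  · rw [Finset.mul_sum, Finset.mul_sum]
    refine Finset.sum_congr rfl fun v _ => ?_
    field_simp
    ring
end
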